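/- Let P be a permutation matrix and let t, n ≥ 1 be integers with N = tn. Then S_P(N) ≤ |T_n(P)| · (t!)^n · (ex(n,P)/n)^N, where S_P(N) is the number of N×N permutation matrices avoiding P, T_n(P) is the set of n×n 0-1 matrices avoiding P, and ex(n,P) is the maximum number of ones in an n×n 0-1 matrix avoiding P. -/

import Mathlib

open Filter

noncomputable section

/-- An `n × n` 0-1 matrix `A` contains the `k × k` pattern `P` if there are strictly
increasing rows and columns selecting a submatrix that dominates `P`. -/
def Contains {k n : ℕ} (P : Matrix (Fin k) (Fin k) Bool)
    (A : Matrix (Fin n) (Fin n) Bool) : Prop :=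
  ∃ r : Fin k → Fin n, ∃ c : Fin k → Fin n,
    StrictMono r ∧ StrictMono c ∧ ∀ i j, P i j = true → A (r i) (c j) = true

/-- `A` avoids the pattern `P`. -/
def Avoids {k n : ℕ} (P : Matrix (Fin k) (Fin k) Bool)
    (A : Matrix (Fin n) (Fin n) Bool) : Prop := ¬ Contains P A

/-- The permutation matrix of a permutation. -/
def permMatrix {n : ℕ} (σ : Equiv.Perm (Fin n)) : Matrix (Fin n) (Fin n) Bool :=
  fun i j => decide (σ i = j)

/-- `A` is a permutation matrix. -/
def IsPermMatrix {n : ℕ} (A : Matrix (Fin n) (Fin n) Bool) : Prop :=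
  ∃ σ : Equiv.Perm (Fin n), A = permMatrix σ

/-- Number of ones of a 0-1 matrix. -/
def numOnes {m n : ℕ} (A : Matrix (Fin m) (Fin n) Bool) : ℕ :=
  (Finset.univ.filter fun p : Fin m × Fin n => A p.1 p.2 = true).card

/-- `SW P n = S_P(n)`, the number of `n × n` permutation matrices avoiding `P`. -/
def SW {k : ℕ} (P : Matrix (Fin k) (Fin k) Bool) (n : ℕ) : ℕ :=
  Nat.card {A : Matrix (Fin n) (Fin n) Bool // IsPermMatrix A ∧ Avoids P A}

/-- `exFH P n = ex(n, P)`, the maximum number of ones in an `n × n` 0-1 matrix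
avoiding `P`. -/
def exFH {k : ℕ} (P : Matrix (Fin k) (Fin k) Bool) (n : ℕ) : ℕ :=
  sSup {m : ℕ | ∃ A : Matrix (Fin n) (Fin n) Bool, Avoids P A ∧ numOnes A = m}

/-- `F c = inf over positive integers t of (t!)^(1/t) * 15^(c/t) / c`. -/
def F (c : ℝ) : ℝ :=
  ⨅ t : ℕ+, ((t : ℕ).factorial : ℝ) ^ ((1 : ℝ) / (t : ℕ)) * (15 : ℝ) ^ (c / (t : ℕ)) / c

/-- The block (among `n` consecutive blocks of length `t`) containing a given
index of `Fin (t * n)`. -/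
def blockOf {t n : ℕ} (ht : 0 < t) (i : Fin (t * n)) : Fin n :=
  ⟨(i : ℕ) / t, by
    rw [Nat.div_lt_iff_lt_mul ht]
    exact lt_of_lt_of_le i.isLt (le_of_eq (mul_comm t n))⟩

open Classical in
/-- The `t`-contraction of an `(t*n) × (t*n)` 0-1 matrix: entry `(a,b)` is 1 iff
the block `I_a × I_b` contains a one. -/
def contMat {t n : ℕ} (ht : 0 < t) (A : Matrix (Fin (t * n)) (Fin (t * n)) Bool) :
    Matrix (Fin n) (Fin n) Bool :=
  fun a b => decide (∃ i j, blockOf ht i = a ∧ blockOf ht j = b ∧ A i j = true)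

end

open Finset

lemma blockOf_lt {t n : ℕ} (ht : 0 < t) {i j : Fin (t * n)}
    (h : blockOf ht i < blockOf ht j) : i < j := by
  by_contra hc
  push_neg at hc
  exact absurd (Nat.div_le_div_right (c := t) (Fin.le_iff_val_le_val.mp hc)) (not_le.mpr h)

lemma avoids_contMat {k t n : ℕ} (P : Matrix (Fin k) (Fin k) Bool) (hP : IsPermMatrix P)
    (ht : 0 < t) (A : Matrix (Fin (t * n)) (Fin (t * n)) Bool) (hA : Avoids P A) :
    Avoids P (contMat ht A) := by
  obtain ⟨π, rfl⟩ := hP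
  rintro ⟨r, c, hr, hc, h⟩
  have key : ∀ i : Fin k, ∃ x y : Fin (t * n),
      blockOf ht x = r i ∧ blockOf ht y = c (π i) ∧ A x y = true := by
    intro i
    have := h i (π i) (by simp [permMatrix])
    simpa [contMat, decide_eq_true_eq] using this
  choose x y hx hy hxy using key
  refine hA ⟨x, fun j => y (π.symm j), ?_, ?_, ?_⟩
  · intro i i' hii'
    exact blockOf_lt ht (by rw [hx, hx]; exact hr hii')
  · intro j j' hjj'
    refine blockOf_lt ht ?_
    rw [hy, hy, π.apply_symm_apply, π.apply_symm_apply]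
    exact hc hjj'
  · intro i j hij
    have : π i = j := by simpa [permMatrix] using hij
    subst this
    simpa [π.symm_apply_apply] using hxy i

lemma card_blockFiber {t n : ℕ} (ht : 0 < t) (a : Fin n) :
    (univ.filter fun j : Fin (t * n) => blockOf ht j = a).card = t := by
  have h : ∀ s : Fin t, (a : ℕ) * t + (s : ℕ) < t * n := by
    intro s
    calc (a:ℕ) * t + (s:ℕ) < (a:ℕ) * t + t := by omega
    _ = ((a:ℕ) + 1) * t := by ring
    _ ≤ n * t := Nat.mul_le_mul_right t a.isLt
    _ = t * n := mul_comm n t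
  have := Finset.card_bij' (s := univ.filter fun j : Fin (t * n) => blockOf ht j = a)
    (t := (univ : Finset (Fin t)))
    (i := fun j _ => (⟨(j : ℕ) % t, Nat.mod_lt _ ht⟩ : Fin t))
    (j := fun s _ => (⟨(a:ℕ)*t + (s:ℕ), h s⟩ : Fin (t*n)))
    (hi := fun _ _ => mem_univ _)
    (hj := ?_) (left_inv := ?_) (right_inv := ?_)
  · rw [this]; simp
  · intro s _
    simp only [mem_filter, mem_univ, true_and, blockOf]
    refine Finset.mem_filter.mpr ⟨mem_univ _, ?_⟩
    apply Fin.ext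
    simp only
    rw [Nat.add_comm, Nat.add_mul_div_right _ _ ht, Nat.div_eq_of_lt s.isLt, Nat.zero_add]
  · intro j hj
    simp only [mem_filter, mem_univ, true_and] at hj
    have hj' : (j : ℕ) / t = (a : ℕ) := congrArg Fin.val hj
    apply Fin.ext
    simp only
    rw [← hj', mul_comm ((j:ℕ)/t) t]
    exact Nat.div_add_mod _ _
  · intro s _
    apply Fin.ext
    simp only
    rw [Nat.add_comm, Nat.add_mul_mod_self_right, Nat.mod_eq_of_lt s.isLt]

lemma card_permFiber {t n : ℕ} (ht : 0 < t) (σ : Equiv.Perm (Fin (t * n))) (b : Fin n) :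
    (univ.filter fun i : Fin (t * n) => blockOf ht (σ i) = b).card = t := by
  have : (univ.filter fun i : Fin (t * n) => blockOf ht (σ i) = b).card
      = (univ.filter fun j : Fin (t * n) => blockOf ht j = b).card := ?_
  · rw [this, card_blockFiber ht b]
  apply Finset.card_bij (fun i _ => σ i)
  · intro i hi
    simp only [mem_filter, mem_univ, true_and] at hi ⊢
    exact hi
  · intro i _ j _ hij
    exact σ.injective hij
  · intro j hj
    simp only [mem_filter, mem_univ, true_and] at hj ⊢
    exact ⟨σ.symm j, by simpa using hj, by simp⟩

lemma numOnes_eq_sum {m n : ℕ} (A : Matrix (Fin m) (Fin n) Bool) :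
    numOnes A = ∑ a : Fin m, (univ.filter fun b => A a b = true).card := by
  rw [numOnes]
  rw [Finset.card_filter]
  rw [Fintype.sum_prod_type]
  exact Finset.sum_congr rfl fun a _ => (Finset.card_filter _ _).symm

lemma numOnes_le_exFH {k n : ℕ} (P : Matrix (Fin k) (Fin k) Bool)
    (B : Matrix (Fin n) (Fin n) Bool) (hB : Avoids P B) : numOnes B ≤ exFH P n := by
  apply le_csSup
  · refine ⟨n * n, ?_⟩
    rintro m ⟨A, _, rfl⟩
    calc numOnes A ≤ Fintype.card (Fin n × Fin n) := (Finset.card_filter_le _ _).trans (by simp)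
    _ = n * n := by simp
  · exact ⟨B, hB, rfl⟩

lemma descFactorial_le_factorial (n k : ℕ) : n.descFactorial k ≤ n.factorial := by
  rcases le_or_gt k n with h | h
  · calc n.descFactorial k ≤ (n - k).factorial * n.descFactorial k :=
        Nat.le_mul_of_pos_left _ (Nat.factorial_pos _)
    _ = n.factorial := Nat.factorial_mul_descFactorial h
  · rw [Nat.descFactorial_eq_zero_iff_lt.mpr h]
    exact Nat.zero_le _

lemma permMatrix_injective {n : ℕ} : Function.Injective (permMatrix (n := n)) := by
  intro σ τ h
  ext i : 1
  have h1 : permMatrix τ i (σ i) = true := by rw [← h]; simp [permMatrix]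
  have h2 : τ i = σ i := by simpa [permMatrix] using h1
  exact h2.symm

open Classical in
lemma SW_eq_card_filter {k N : ℕ} (P : Matrix (Fin k) (Fin k) Bool) :
    SW P N = (univ.filter fun σ : Equiv.Perm (Fin N) => Avoids P (permMatrix σ)).card := by
  rw [SW]
  have : Nat.card {σ : Equiv.Perm (Fin N) // Avoids P (permMatrix σ)}
      = Nat.card {A : Matrix (Fin N) (Fin N) Bool // IsPermMatrix A ∧ Avoids P A} := by
    apply Nat.card_eq_of_bijective (fun σh => ⟨permMatrix σh.1, ⟨σh.1, rfl⟩, σh.2⟩)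
    constructor
    · intro a b hab
      exact Subtype.ext (permMatrix_injective (congrArg Subtype.val hab))
    · rintro ⟨A, ⟨σ, rfl⟩, hA⟩
      exact ⟨⟨σ, hA⟩, rfl⟩
  rw [← this, Nat.card_eq_fintype_card, Fintype.card_subtype]

open Classical in
lemma card_inj_subtype_le {N t n : ℕ} (f' : Fin N → Fin n) :
    Fintype.card {g : Fin N → Fin t // ∀ b : Fin n, Set.InjOn g {i | f' i = b}}
      ≤ t.factorial ^ n := by
  have hΨ : Function.Injective
      (fun gh : {g : Fin N → Fin t // ∀ b : Fin n, Set.InjOn g {i | f' i = b}} =>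
        (fun b : Fin n => (⟨fun i : {i // f' i = b} => gh.1 i.1,
          fun x y hxy => Subtype.ext (gh.2 b x.2 y.2 hxy)⟩ : {i // f' i = b} ↪ Fin t))) := by
    intro g g' h
    apply Subtype.ext
    funext i
    have := congrFun h (f' i)
    exact DFunLike.congr_fun this ⟨i, rfl⟩
  calc Fintype.card {g : Fin N → Fin t // ∀ b : Fin n, Set.InjOn g {i | f' i = b}}
      ≤ Fintype.card (∀ b : Fin n, {i // f' i = b} ↪ Fin t) :=
        Fintype.card_le_of_injective _ hΨ
    _ = ∏ b : Fin n, Fintype.card ({i // f' i = b} ↪ Fin t) := Fintype.card_pi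
    _ ≤ ∏ _b : Fin n, t.factorial := by
        apply Finset.prod_le_prod
        · intro _ _; exact Nat.zero_le _
        · intro b _
          rw [Fintype.card_embedding_eq, Fintype.card_fin]
          exact descFactorial_le_factorial _ _
    _ = t.factorial ^ n := by simp

open Classical in
lemma fiber_card_le {t n : ℕ} (ht : 0 < t) (B : Matrix (Fin n) (Fin n) Bool) :
    (univ.filter fun σ : Equiv.Perm (Fin (t * n)) => contMat ht (permMatrix σ) = B).card
      ≤ (∏ i : Fin (t * n), (univ.filter fun b : Fin n => B (blockOf ht i) b = true).card)
          * t.factorial ^ n := by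
  classical
  set S := univ.filter fun σ : Equiv.Perm (Fin (t * n)) => contMat ht (permMatrix σ) = B with hS
  -- the target type
  let T := Σ f : (∀ i : Fin (t * n), {b : Fin n // B (blockOf ht i) b = true}),
    {g : Fin (t * n) → Fin t // ∀ b : Fin n, Set.InjOn g {i | (f i).1 = b}}
  -- key facts about members of S
  have hmem : ∀ σ ∈ S, ∀ i : Fin (t * n), B (blockOf ht i) (blockOf ht (σ i)) = true := by
    intro σ hσ i
    rw [hS, mem_filter] at hσ
    rw [← hσ.2]
    simp only [contMat, decide_eq_true_eq]
    exact ⟨i, σ i, rfl, rfl, by simp [permMatrix]⟩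
  -- the encoding map
  let Φ : {σ // σ ∈ S} → T := fun σh =>
    ⟨fun i => ⟨blockOf ht (σh.1 i), hmem σh.1 σh.2 i⟩,
     fun i => ⟨(σh.1 i : ℕ) % t, Nat.mod_lt _ ht⟩,
     by
      intro b x hx y hy hxy
      simp only [Set.mem_setOf_eq] at hx hy
      have hmod : (σh.1 x : ℕ) % t = (σh.1 y : ℕ) % t := congrArg Fin.val hxy
      have hdiv : (σh.1 x : ℕ) / t = (σh.1 y : ℕ) / t :=
        congrArg Fin.val (hx.trans hy.symm)
      have : (σh.1 x : ℕ) = (σh.1 y : ℕ) := by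
        rw [← Nat.div_add_mod (σh.1 x : ℕ) t, ← Nat.div_add_mod (σh.1 y : ℕ) t, hmod, hdiv]
      exact σh.1.injective (Fin.ext this)⟩
  have hΦ : Function.Injective Φ := by
    rintro ⟨σ, hσ⟩ ⟨τ, hτ⟩ h
    have hfst : ∀ i, blockOf ht (σ i) = blockOf ht (τ i) := fun i =>
      congrArg Subtype.val (congrFun (congrArg Sigma.fst h) i)
    have hsnd : ∀ i, (σ i : ℕ) % t = (τ i : ℕ) % t := fun i =>
      congrArg Fin.val (congrFun (congrArg (fun z : T => (z.2.1 : Fin (t * n) → Fin t)) h) i)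
    apply Subtype.ext
    ext i : 1
    apply Fin.ext
    have h1 : (σ i : ℕ) / t = (τ i : ℕ) / t := congrArg Fin.val (hfst i)
    have h2 := hsnd i
    rw [← Nat.div_add_mod (σ i : ℕ) t, ← Nat.div_add_mod (τ i : ℕ) t, h1, h2]
  calc S.card = Fintype.card {σ // σ ∈ S} := (Fintype.card_coe S).symm
    _ ≤ Fintype.card T := Fintype.card_le_of_injective Φ hΦ
    _ = ∑ f : (∀ i : Fin (t * n), {b : Fin n // B (blockOf ht i) b = true}),
          Fintype.card {g : Fin (t * n) → Fin t // ∀ b : Fin n, Set.InjOn g {i | (f i).1 = b}} :=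
        Fintype.card_sigma
    _ ≤ ∑ _f : (∀ i : Fin (t * n), {b : Fin n // B (blockOf ht i) b = true}),
          t.factorial ^ n := Finset.sum_le_sum fun f _ => card_inj_subtype_le _
    _ = Fintype.card (∀ i : Fin (t * n), {b : Fin n // B (blockOf ht i) b = true})
          * t.factorial ^ n := by rw [Finset.sum_const, Finset.card_univ, smul_eq_mul]
    _ = (∏ i : Fin (t * n), (univ.filter fun b : Fin n => B (blockOf ht i) b = true).card)
          * t.factorial ^ n := by
        congr 1
        rw [Fintype.card_pi]
        exact Finset.prod_congr rfl fun i _ => Fintype.card_subtype _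

lemma amgm {n : ℕ} (hn : 0 < n) (z : Fin n → ℝ) (hz : ∀ a, 0 ≤ z a) :
    ∏ a, z a ≤ ((∑ a, z a) / n) ^ n := by
  have hn' : (n : ℝ) ≠ 0 := Nat.cast_ne_zero.mpr hn.ne'
  have h1 := Real.geom_mean_le_arith_mean_weighted univ (fun _ => 1 / (n : ℝ)) z
    (fun _ _ => by positivity) (by simp [Finset.sum_const]; field_simp) (fun a _ => hz a)
  have hs : ∑ a : Fin n, 1 / (n : ℝ) * z a = (∑ a, z a) / n := by
    rw [← Finset.mul_sum]; ring
  have hprod : ∏ a : Fin n, z a ^ (1 / (n : ℝ)) = (∏ a, z a) ^ (1 / (n : ℝ)) := by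
    rw [← Real.finset_prod_rpow univ z (fun a _ => hz a)]
  rw [hs, hprod] at h1
  have h2 := pow_le_pow_left₀ (Real.rpow_nonneg (Finset.prod_nonneg fun a _ => hz a) _) h1 n
  calc ∏ a, z a = ((∏ a, z a) ^ (1 / (n : ℝ))) ^ n := by
        rw [← Real.rpow_natCast ((∏ a, z a) ^ (1 / (n : ℝ))) n,
          ← Real.rpow_mul (Finset.prod_nonneg fun a _ => hz a)]
        rw [one_div, inv_mul_cancel₀ hn', Real.rpow_one]
    _ ≤ ((∑ a, z a) / n) ^ n := h2

lemma prod_d_le {k t n : ℕ} (P : Matrix (Fin k) (Fin k) Bool) (ht : 0 < t) (hn : 0 < n)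
    (B : Matrix (Fin n) (Fin n) Bool) (hB : Avoids P B) :
    (∏ i : Fin (t * n), ((univ.filter fun b : Fin n => B (blockOf ht i) b = true).card : ℝ))
      ≤ ((exFH P n : ℝ) / n) ^ (t * n) := by
  set d : Fin n → ℕ := fun a => (univ.filter fun b : Fin n => B a b = true).card with hd
  have hgroup : (∏ i : Fin (t * n), ((d (blockOf ht i) : ℝ)))
      = ∏ a : Fin n, (d a : ℝ) ^ t := by
    rw [← Finset.prod_fiberwise_of_maps_to (g := blockOf ht) (fun i _ => mem_univ _)
      (fun i => (d (blockOf ht i) : ℝ))]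
    refine Finset.prod_congr rfl fun a _ => ?_
    rw [Finset.prod_congr rfl (fun i hi => ?_), Finset.prod_const, card_blockFiber ht a]
    rw [(Finset.mem_filter.mp hi).2]
  have hsum : ∑ a, (d a : ℝ) = (numOnes B : ℝ) := by
    rw [numOnes_eq_sum]
    push_cast
    rfl
  have hex : (numOnes B : ℝ) ≤ (exFH P n : ℝ) :=
    Nat.cast_le.mpr (numOnes_le_exFH P B hB)
  calc (∏ i : Fin (t * n), ((univ.filter fun b : Fin n => B (blockOf ht i) b = true).card : ℝ))
      = ∏ a : Fin n, (d a : ℝ) ^ t := hgroup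
    _ = (∏ a : Fin n, (d a : ℝ)) ^ t := by rw [Finset.prod_pow]
    _ ≤ (((∑ a, (d a : ℝ)) / n) ^ n) ^ t := by
        apply pow_le_pow_left₀ (Finset.prod_nonneg fun a _ => Nat.cast_nonneg _) _ t
        
        exact amgm hn _ fun a => Nat.cast_nonneg _
    _ ≤ (((exFH P n : ℝ) / n) ^ n) ^ t := by
        have hc : (0:ℝ) < (n:ℝ) := Nat.cast_pos.mpr hn
        have hsum0 : (0:ℝ) ≤ ∑ a, (d a : ℝ) := Finset.sum_nonneg fun a _ => Nat.cast_nonneg _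
        have hdiv : (∑ a, (d a : ℝ)) / (n:ℝ) ≤ (exFH P n : ℝ) / (n:ℝ) :=
          div_le_div_of_nonneg_right (by rw [hsum]; exact hex) hc.le
        have hb : ((∑ a, (d a : ℝ)) / (n:ℝ)) ^ n ≤ ((exFH P n : ℝ) / (n:ℝ)) ^ n :=
          pow_le_pow_left₀ (div_nonneg hsum0 hc.le) hdiv n
        exact pow_le_pow_left₀ (pow_nonneg (div_nonneg hsum0 hc.le) n) hb t
    _ = ((exFH P n : ℝ) / n) ^ (t * n) := by rw [← pow_mul, mul_comm n t]

theorem SW_le_card_mul {k : ℕ} (P : Matrix (Fin k) (Fin k) Bool)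
    (hP : IsPermMatrix P) (t n : ℕ) (ht : 0 < t) (hn : 0 < n) :
    (SW P (t * n) : ℝ) ≤
      (Nat.card {B : Matrix (Fin n) (Fin n) Bool // Avoids P B} : ℝ) *
        (t.factorial : ℝ) ^ n * ((exFH P n : ℝ) / n) ^ (t * n) := by
  classical
  set S := univ.filter fun σ : Equiv.Perm (Fin (t * n)) => Avoids P (permMatrix σ) with hSdef
  set TB := univ.filter fun B : Matrix (Fin n) (Fin n) Bool => Avoids P B with hTBdef
  have hcardTB : (Nat.card {B : Matrix (Fin n) (Fin n) Bool // Avoids P B}) = TB.card := by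
    rw [Nat.card_eq_fintype_card, Fintype.card_subtype]
  have hmaps : ∀ σ ∈ S, contMat ht (permMatrix σ) ∈ TB := by
    intro σ hσ
    rw [hSdef, mem_filter] at hσ
    rw [hTBdef, mem_filter]
    exact ⟨mem_univ _, avoids_contMat P hP ht _ hσ.2⟩
  have hsplit : S.card = ∑ B ∈ TB, (S.filter fun σ => contMat ht (permMatrix σ) = B).card :=
    Finset.card_eq_sum_card_fiberwise hmaps
  have hfiber : ∀ B ∈ TB,
      ((S.filter fun σ => contMat ht (permMatrix σ) = B).card : ℝ)
        ≤ ((exFH P n : ℝ) / n) ^ (t * n) * (t.factorial : ℝ) ^ n := by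
    intro B hB
    have hBav : Avoids P B := (mem_filter.mp hB).2
    have h1 : (S.filter fun σ => contMat ht (permMatrix σ) = B).card
        ≤ (univ.filter fun σ : Equiv.Perm (Fin (t * n)) => contMat ht (permMatrix σ) = B).card :=
      Finset.card_le_card fun σ hσ =>
        Finset.mem_filter.mpr ⟨mem_univ _, (Finset.mem_filter.mp hσ).2⟩
    have h2 := fiber_card_le ht B
    calc ((S.filter fun σ => contMat ht (permMatrix σ) = B).card : ℝ)
        ≤ (((∏ i : Fin (t * n),
              (univ.filter fun b : Fin n => B (blockOf ht i) b = true).card)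
            * t.factorial ^ n : ℕ) : ℝ) := by exact_mod_cast h1.trans h2
      _ = (∏ i : Fin (t * n),
              ((univ.filter fun b : Fin n => B (blockOf ht i) b = true).card : ℝ))
            * (t.factorial : ℝ) ^ n := by push_cast; rfl
      _ ≤ ((exFH P n : ℝ) / n) ^ (t * n) * (t.factorial : ℝ) ^ n := by
          apply mul_le_mul_of_nonneg_right (prod_d_le P ht hn B hBav) (by positivity)
  calc (SW P (t * n) : ℝ) = (S.card : ℝ) := by rw [SW_eq_card_filter]
    _ = ∑ B ∈ TB, ((S.filter fun σ => contMat ht (permMatrix σ) = B).card : ℝ) := by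
        rw [hsplit]; push_cast; rfl
    _ ≤ ∑ _B ∈ TB, ((exFH P n : ℝ) / n) ^ (t * n) * (t.factorial : ℝ) ^ n :=
        Finset.sum_le_sum hfiber
    _ = (TB.card : ℝ) * (((exFH P n : ℝ) / n) ^ (t * n) * (t.factorial : ℝ) ^ n) := by
        rw [Finset.sum_const, nsmul_eq_mul]
    _ = (Nat.card {B : Matrix (Fin n) (Fin n) Bool // Avoids P B} : ℝ) *
          (t.factorial : ℝ) ^ n * ((exFH P n : ℝ) / n) ^ (t * n) := by
        rw [hcardTB]; ring
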